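/- If H ⊑* G and E₁,...,E_k are closed subsets of H, then cl_G(∩_{i=1}^k E_i) = ∩_{i=1}^k cl_G(E_i). -/

import Mathlib

open scoped Classical

/-- A combinatorial pregeometry (matroid) on the ground type `α`, given by a
dimension (rank) function on finite subsets. -/
structure Pregeometry (α : Type*) [DecidableEq α] where
  dim : Finset α → ℕ
  dim_empty : dim ∅ = 0
  dim_le_insert : ∀ (A : Finset α) (x : α), dim A ≤ dim (insert x A)
  insert_le_dim : ∀ (A : Finset α) (x : α), dim (insert x A) ≤ dim A + 1
  submodular : ∀ A B : Finset α, dim (A ∪ B) + dim (A ∩ B) ≤ dim A + dim B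

namespace Pregeometry

variable {α : Type*} [DecidableEq α] (G : Pregeometry α)

/-- Closure of an arbitrary subset. -/
def cl (Y : Set α) : Set α :=
  {x | ∃ A : Finset α, ↑A ⊆ Y ∧ G.dim (insert x A) = G.dim A}

/-- `Y` is closed (in the ambient pregeometry `G`). -/
def IsClosed (Y : Set α) : Prop := G.cl Y = Y

/-- `X` is a closed set of the subpregeometry of `G` induced on `P`
(whose closure operator is `Y ↦ cl Y ∩ P`). -/
def IsClosedIn (P X : Set α) : Prop := X ⊆ P ∧ G.cl X ∩ P = X

/-- Dimension of an arbitrary subset, with value `⊤` when infinite-dimensional. -/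
noncomputable def edim (Y : Set α) : ℕ∞ :=
  ⨆ (A : Finset α) (_ : ↑A ⊆ Y), (G.dim A : ℕ∞)

/-- The (natural number) dimension of a finite-dimensional subset. -/
noncomputable def sdim (Y : Set α) : ℕ := (G.edim Y).toNat

/-- The alternating inclusion–exclusion sum
`Δ_G(Σ) = Σ_{∅ ≠ S ⊆ Σ} (-1)^{|S|+1} d(⋂ S)` of a finite collection of sets. -/
noncomputable def flatSum (Sig : Finset (Set α)) : ℤ :=
  ∑ S ∈ Sig.powerset.filter (· ≠ ∅),
    (-1) ^ (S.card + 1) * (G.sdim (⋂₀ ↑S) : ℤ)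

/-- `P ⊑* Q`: for the subpregeometries induced on `P ⊆ Q`, the dimension of the
intersection of two closed sets of `P` equals the dimension of the intersection
of their closures in `Q` (the closure of `X` in `Q` being `cl X ∩ Q`). -/
def SqStar (P Q : Set α) : Prop := P ⊆ Q ∧
  ∀ X₁ X₂ : Set α, G.IsClosedIn P X₁ → G.IsClosedIn P X₂ →
    G.edim (X₁ ∩ X₂) = G.edim (G.cl X₁ ∩ G.cl X₂ ∩ Q)

/-- `P ⊑ Q`: `P` is strongly embedded in `Q`: for every finite collection `Σ` of
finite-dimensional closed sets of `Q`, `Δ_P(Σ_P) ≤ Δ_Q(Σ)` where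
`Σ_P = {E ∩ P : E ∈ Σ}`. -/
def Sq (P Q : Set α) : Prop := P ⊆ Q ∧
  ∀ Sig : Finset (Set α), (∀ E ∈ Sig, G.IsClosedIn Q E) →
    (∀ E ∈ Sig, G.edim E ≠ ⊤) →
    G.flatSum (Sig.image (· ∩ P)) ≤ G.flatSum Sig

/-- The subpregeometry induced on `P` is flat: every finite collection of
finite-dimensional closed sets satisfies `d(⋃ Σ) ≤ Δ(Σ)`. -/
def FlatIn (P : Set α) : Prop :=
  ∀ Sig : Finset (Set α), (∀ E ∈ Sig, G.IsClosedIn P E) →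
    (∀ E ∈ Sig, G.edim E ≠ ⊤) →
    (G.sdim (⋃₀ ↑Sig) : ℤ) ≤ G.flatSum Sig

/-- The α-function of the subpregeometry of `G` induced on `P`:
`α(X) = |X| − d(X) − Σ_{Y ⊊ X closed} α(Y)`. -/
noncomputable def alphaIn (P : Set α) (X : Finset α) : ℤ :=
  (X.card : ℤ) - (G.dim X : ℤ) -
    ∑ Y ∈ (X.powerset.filter fun Y => Y ≠ X ∧ G.IsClosedIn P ↑Y).attach,
      alphaIn P Y.1
termination_by X.card
decreasing_by
  have h := Y.2
  simp only [Finset.mem_filter, Finset.mem_powerset] at h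
  exact Finset.card_lt_card (lt_of_le_of_ne h.1 h.2.1)

end Pregeometry

/-- A hypergraph on the vertex type `α`: a set of nonempty finite edges. -/
structure Hypergraph' (α : Type*) where
  edges : Set (Finset α)
  nonempty_edges : ∀ e ∈ edges, e ≠ ∅

namespace Hypergraph'

variable {α : Type*} [DecidableEq α] (A : Hypergraph' α)

/-- The set of edges contained in a set of vertices. -/
def edgesIn (P : Set α) : Set (Finset α) := {e | e ∈ A.edges ∧ ↑e ⊆ P}

/-- The predimension `δ(P) = |P| − |R[P]|` of a finite set of vertices. -/
noncomputable def delta (P : Finset α) : ℤ :=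
  (P.card : ℤ) - (A.edgesIn ↑P).ncard

/-- The relative predimension `δ(L/P) = |L∖P| − |R[L∪P]∖R[P]|`. -/
noncomputable def deltaRel (L : Finset α) (P : Set α) : ℤ :=
  ((↑L \ P : Set α).ncard : ℤ) -
    ({e | e ∈ A.edges ∧ ↑e ⊆ ↑L ∪ P ∧ ¬ ↑e ⊆ P} : Set (Finset α)).ncard

/-- `P` is self-sufficient in `A`: `δ(X/P) ≥ 0` for every finite `X`, stated so
as to be meaningful even when infinitely many edges are involved. -/
def SelfSuff (P : Set α) : Prop :=
  ∀ X : Finset α, ∀ Es : Finset (Finset α),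
    (∀ e ∈ Es, e ∈ A.edges ∧ ↑e ⊆ ↑X ∪ P ∧ ¬ ↑e ⊆ P) →
    (Es.card : ℤ) ≤ ((↑X \ P : Set α).ncard : ℤ)

/-- The dimension function associated to a hypergraph:
`d(X) = inf {δ(B) : X ⊆ B finite}`. -/
noncomputable def hdim (X : Finset α) : ℤ :=
  sInf {d : ℤ | ∃ B : Finset α, X ⊆ B ∧ d = A.delta B}

/-- The induced subhypergraph on a set `P` of vertices (keeping `α` as the
ambient vertex type). -/
def restrict (P : Set α) : Hypergraph' α :=
  ⟨{e | e ∈ A.edges ∧ ↑e ⊆ P}, fun e he => A.nonempty_edges e he.1⟩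

/-- A pregeometry `G` is represented by the hypergraph `A` if the associated
dimension function of `A` is the dimension function of `G`. -/
def Represents (G : Pregeometry α) : Prop :=
  ∀ X : Finset α, (G.dim X : ℤ) = A.hdim X

end Hypergraph'

namespace Pregeometry

variable {α : Type*} [DecidableEq α] (G : Pregeometry α)

lemma dim_mono : ∀ {A B : Finset α}, A ⊆ B → G.dim A ≤ G.dim B := by
  have key : ∀ (s A : Finset α), G.dim A ≤ G.dim (A ∪ s) := by
    intro s
    induction s using Finset.induction_on with
    | empty => simp
    | insert a s hx ih =>
      intro A
      calc G.dim A ≤ G.dim (A ∪ s) := ih A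
        _ ≤ G.dim (insert a (A ∪ s)) := G.dim_le_insert _ _
        _ = G.dim (A ∪ insert a s) := by rw [Finset.union_insert]
  intro A B h
  have : A ∪ (B \ A) = B := Finset.union_sdiff_of_subset h
  calc G.dim A ≤ G.dim (A ∪ (B \ A)) := key _ _
    _ = G.dim B := by rw [this]

lemma subset_cl (Y : Set α) : Y ⊆ G.cl Y := by
  intro y hy
  exact ⟨{y}, by simpa using hy, by simp⟩

lemma cl_mono {Y Z : Set α} (h : Y ⊆ Z) : G.cl Y ⊆ G.cl Z := by
  rintro x ⟨A, hA, hd⟩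
  exact ⟨A, hA.trans h, hd⟩

lemma dim_insert_of_mem_cl {A : Finset α} {x : α} (hx : x ∈ G.cl ↑A) :
    G.dim (insert x A) = G.dim A := by
  obtain ⟨A', hA', hd⟩ := hx
  have hsub : A' ⊆ A := Finset.coe_subset.1 hA'
  have hsm := G.submodular (insert x A') A
  have h1 : insert x A' ∪ A = insert x A := by
    rw [Finset.insert_union, Finset.union_eq_right.2 hsub]
  have h2 : A' ⊆ insert x A' ∩ A :=
    Finset.subset_inter (Finset.subset_insert _ _) hsub
  rw [h1, hd] at hsm
  have := G.dim_mono h2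
  have hle : G.dim (insert x A) ≤ G.dim A := by omega
  exact le_antisymm hle (G.dim_le_insert A x)

lemma dim_union_of_subset_cl {A B : Finset α} (h : ↑B ⊆ G.cl ↑A) :
    G.dim (A ∪ B) = G.dim A := by
  induction B using Finset.induction_on with
  | empty => simp
  | insert b B hx ih =>
    have hb : b ∈ G.cl ↑A := h (by simp)
    have hB : ↑B ⊆ G.cl ↑A := fun y hy => h (by simp [hy])
    have hAB : G.dim (A ∪ B) = G.dim A := ih hB
    have hb' : b ∈ G.cl ↑(A ∪ B) := G.cl_mono (by simp [Finset.coe_subset]) hb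
    have : G.dim (insert b (A ∪ B)) = G.dim (A ∪ B) := G.dim_insert_of_mem_cl hb'
    rw [Finset.union_insert, this, hAB]

lemma cl_finset_trans {A : Finset α} {Z : Set α} (h : Z ⊆ G.cl ↑A) :
    G.cl Z ⊆ G.cl ↑A := by
  rintro x ⟨B, hBZ, hd⟩
  have hB : ↑B ⊆ G.cl ↑A := hBZ.trans h
  have hAB : G.dim (A ∪ B) = G.dim A := G.dim_union_of_subset_cl hB
  have hx : x ∈ G.cl ↑(A ∪ B) := ⟨B, by simp [Finset.coe_subset], hd⟩
  have h1 : G.dim (insert x (A ∪ B)) = G.dim (A ∪ B) := G.dim_insert_of_mem_cl hx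
  have h2 : G.dim (insert x A) ≤ G.dim (insert x (A ∪ B)) :=
    G.dim_mono (Finset.insert_subset_insert _ Finset.subset_union_left)
  have h3 : G.dim A ≤ G.dim (insert x A) := G.dim_le_insert A x
  exact ⟨A, subset_rfl, by omega⟩

lemma dim_le_edim {A : Finset α} {Y : Set α} (h : ↑A ⊆ Y) :
    (G.dim A : ℕ∞) ≤ G.edim Y := le_iSup₂ (f := fun A (_ : ↑A ⊆ Y) => (G.dim A : ℕ∞)) A h

lemma edim_mono {Y Z : Set α} (h : Y ⊆ Z) : G.edim Y ≤ G.edim Z := by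
  refine iSup₂_le fun A hA => G.dim_le_edim (hA.trans h)

lemma edim_cl_finset_le (A : Finset α) : G.edim (G.cl ↑A) ≤ (G.dim A : ℕ∞) := by
  refine iSup₂_le fun B hB => ?_
  have : G.dim B ≤ G.dim (A ∪ B) := G.dim_mono Finset.subset_union_right
  rw [G.dim_union_of_subset_cl hB] at this
  exact_mod_cast this

lemma exists_finset_dim_eq {Y : Set α} {n : ℕ} (h : G.edim Y = n) :
    ∃ A : Finset α, ↑A ⊆ Y ∧ G.dim A = n := by
  cases n with
  | zero => exact ⟨∅, by simp, G.dim_empty⟩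
  | succ m =>
    by_contra hcon
    push_neg at hcon
    have hle : G.edim Y ≤ (m : ℕ∞) := by
      refine iSup₂_le fun A hA => ?_
      have h1 : (G.dim A : ℕ∞) ≤ ((m + 1 : ℕ) : ℕ∞) := h ▸ G.dim_le_edim hA
      have h2 : G.dim A ≤ m + 1 := by exact_mod_cast h1
      have h3 : G.dim A ≠ m + 1 := hcon A hA
      exact_mod_cast Nat.lt_succ_iff.1 (lt_of_le_of_ne h2 h3)
    rw [h] at hle
    exact absurd (by exact_mod_cast hle) (by omega)

lemma isClosedIn_inter {H X₁ X₂ : Set α} (h₁ : G.IsClosedIn H X₁)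
    (h₂ : G.IsClosedIn H X₂) : G.IsClosedIn H (X₁ ∩ X₂) := by
  refine ⟨fun y hy => h₁.1 hy.1, Set.Subset.antisymm ?_ ?_⟩
  · intro y hy
    refine ⟨?_, ?_⟩
    · rw [← h₁.2]; exact ⟨G.cl_mono Set.inter_subset_left hy.1, hy.2⟩
    · rw [← h₂.2]; exact ⟨G.cl_mono Set.inter_subset_right hy.1, hy.2⟩
  · exact Set.subset_inter (G.subset_cl _) (fun y hy => h₁.1 hy.1)

lemma cl_inter_of_sqStar {H : Set α} (hH : G.SqStar H Set.univ) {X₁ X₂ : Set α}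
    (h₁ : G.IsClosedIn H X₁) (h₂ : G.IsClosedIn H X₂) :
    G.cl (X₁ ∩ X₂) = G.cl X₁ ∩ G.cl X₂ := by
  apply Set.Subset.antisymm
  · exact Set.subset_inter (G.cl_mono Set.inter_subset_left)
      (G.cl_mono Set.inter_subset_right)
  rintro x ⟨hx1, hx2⟩
  obtain ⟨A₁, hA₁Y, hA₁d⟩ := hx1
  obtain ⟨A₂, hA₂Y, hA₂d⟩ := hx2
  have hxA₁ : x ∈ G.cl ↑A₁ := ⟨A₁, subset_rfl, hA₁d⟩
  have hxA₂ : x ∈ G.cl ↑A₂ := ⟨A₂, subset_rfl, hA₂d⟩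
  set F₁ : Set α := G.cl ↑A₁ ∩ H with hF₁def
  set F₂ : Set α := G.cl ↑A₂ ∩ H with hF₂def
  have hA₁H : (↑A₁ : Set α) ⊆ H := hA₁Y.trans h₁.1
  have hA₂H : (↑A₂ : Set α) ⊆ H := hA₂Y.trans h₂.1
  have hA₁F : (↑A₁ : Set α) ⊆ F₁ := Set.subset_inter (G.subset_cl _) hA₁H
  have hA₂F : (↑A₂ : Set α) ⊆ F₂ := Set.subset_inter (G.subset_cl _) hA₂H
  have hclF₁ : G.cl F₁ = G.cl ↑A₁ :=
    Set.Subset.antisymm (G.cl_finset_trans Set.inter_subset_left) (G.cl_mono hA₁F)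
  have hclF₂ : G.cl F₂ = G.cl ↑A₂ :=
    Set.Subset.antisymm (G.cl_finset_trans Set.inter_subset_left) (G.cl_mono hA₂F)
  have hF₁closed : G.IsClosedIn H F₁ := by
    refine ⟨Set.inter_subset_right, ?_⟩
    rw [hclF₁]
  have hF₂closed : G.IsClosedIn H F₂ := by
    refine ⟨Set.inter_subset_right, ?_⟩
    rw [hclF₂]
  have hF₁X : F₁ ⊆ X₁ := by
    rw [← h₁.2]
    exact Set.inter_subset_inter_left _ (G.cl_mono hA₁Y)
  have hF₂X : F₂ ⊆ X₂ := by
    rw [← h₂.2]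
    exact Set.inter_subset_inter_left _ (G.cl_mono hA₂Y)
  have hdim := hH.2 F₁ F₂ hF₁closed hF₂closed
  rw [Set.inter_univ, hclF₁, hclF₂] at hdim
  have hfin : G.edim (F₁ ∩ F₂) ≠ ⊤ := by
    have h1 : G.edim (F₁ ∩ F₂) ≤ G.edim (G.cl ↑A₁) :=
      G.edim_mono (Set.inter_subset_left.trans Set.inter_subset_left)
    exact ne_top_of_le_ne_top (ENat.coe_ne_top (G.dim A₁))
      (h1.trans (G.edim_cl_finset_le A₁))
  set n : ℕ := (G.edim (F₁ ∩ F₂)).toNat with hndef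
  have hn : G.edim (F₁ ∩ F₂) = (n : ℕ∞) := (ENat.coe_toNat hfin).symm
  obtain ⟨A₀, hA₀sub, hA₀dim⟩ := G.exists_finset_dim_eq hn
  have hins : ↑(insert x A₀) ⊆ G.cl ↑A₁ ∩ G.cl ↑A₂ := by
    intro y hy
    rcases Finset.mem_coe.1 hy |> Finset.mem_insert.1 with h | h
    · subst h; exact ⟨hxA₁, hxA₂⟩
    · have hy' := hA₀sub (Finset.mem_coe.2 h)
      exact ⟨Set.inter_subset_left hy'.1, Set.inter_subset_left hy'.2⟩
  have hle : (G.dim (insert x A₀) : ℕ∞) ≤ G.edim (G.cl ↑A₁ ∩ G.cl ↑A₂) :=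
    G.dim_le_edim hins
  rw [← hdim, hn] at hle
  have hle' : G.dim (insert x A₀) ≤ n := by exact_mod_cast hle
  have heq : G.dim (insert x A₀) = G.dim A₀ :=
    le_antisymm (hA₀dim ▸ hle') (G.dim_le_insert _ _)
  exact G.cl_mono (Set.inter_subset_inter hF₁X hF₂X) ⟨A₀, hA₀sub, heq⟩

end Pregeometry

/-- if `H ⊑* G` and `E₁, …, E_k` are closed in `H`, then
`cl_G(⋂ᵢ Eᵢ) = ⋂ᵢ cl_G(Eᵢ)`. -/
theorem cl_iInter_of_sqStar {α : Type*} [DecidableEq α] (G : Pregeometry α)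
    (H : Set α) (hH : G.SqStar H Set.univ) (k : ℕ) (hk : 0 < k)
    (E : Fin k → Set α) (hE : ∀ i, G.IsClosedIn H (E i)) :
    G.cl (⋂ i, E i) = ⋂ i, G.cl (E i) := by
  induction k with
  | zero => omega
  | succ k ih =>
    rcases Nat.eq_zero_or_pos k with hk0 | hkpos
    · subst hk0
      have h0 : (⋂ i, E i) = E 0 := by
        ext x; simp [Fin.forall_fin_one]
      have h1 : (⋂ i, G.cl (E i)) = G.cl (E 0) := by
        ext x; simp [Fin.forall_fin_one]
      rw [h0, h1]
    · have hsplit : (⋂ i, E i) = E 0 ∩ ⋂ i : Fin k, E i.succ := by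
        ext x
        simp only [Set.mem_iInter, Set.mem_inter_iff]
        constructor
        · intro h; exact ⟨h 0, fun i => h i.succ⟩
        · rintro ⟨h0, hs⟩ i
          rcases Fin.eq_zero_or_eq_succ i with rfl | ⟨j, rfl⟩
          · exact h0
          · exact hs j
      have hsplit' : (⋂ i, G.cl (E i)) = G.cl (E 0) ∩ ⋂ i : Fin k, G.cl (E i.succ) := by
        ext x
        simp only [Set.mem_iInter, Set.mem_inter_iff]
        constructor
        · intro h; exact ⟨h 0, fun i => h i.succ⟩
        · rintro ⟨h0, hs⟩ i
          rcases Fin.eq_zero_or_eq_succ i with rfl | ⟨j, rfl⟩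
          · exact h0
          · exact hs j
      have hclosedInter : ∀ m, 0 < m → ∀ F : Fin m → Set α,
          (∀ i, G.IsClosedIn H (F i)) → G.IsClosedIn H (⋂ i, F i) := by
        intro m
        induction m with
        | zero => omega
        | succ m ihm =>
          intro _ F hF
          rcases Nat.eq_zero_or_pos m with hm0 | hmpos
          · subst hm0
            have : (⋂ i, F i) = F 0 := by ext x; simp [Fin.forall_fin_one]
            rw [this]; exact hF 0
          · have hs : (⋂ i, F i) = F 0 ∩ ⋂ i : Fin m, F i.succ := by
              ext x
              simp only [Set.mem_iInter, Set.mem_inter_iff]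
              constructor
              · intro h; exact ⟨h 0, fun i => h i.succ⟩
              · rintro ⟨h0, hsucc⟩ i
                rcases Fin.eq_zero_or_eq_succ i with rfl | ⟨j, rfl⟩
                · exact h0
                · exact hsucc j
            rw [hs]
            exact G.isClosedIn_inter (hF 0) (ihm hmpos _ (fun i => hF i.succ))
      have hEclosed : G.IsClosedIn H (⋂ i : Fin k, E i.succ) :=
        hclosedInter k hkpos _ (fun i => hE i.succ)
      rw [hsplit, hsplit', G.cl_inter_of_sqStar hH (hE 0) hEclosed,
        ih hkpos (fun i => E i.succ) (fun i => hE i.succ)]
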